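/- For real parameters λ > Λ > 0 and b > 0, the infimum over t > 0 of t·ψ*(b/t) equals b·log(λ/Λ), and it is attained at t = b/(λ − Λ); that is, for every t > 0 one has t·ψ*(b/t) ≥ b·log(λ/Λ), with equality when t = b/(λ − Λ). Consequently the large-deviation rate function of the voting failure event is I(b) = b·log(λ/Λ). -/

import Mathlib

/-- For `lam > Lam > 0` and `b > 0`, the infimum over `t > 0` of `t * ψ*(b/t)`
equals `b * log (lam / Lam)`, attained at `t = b / (lam - Lam)`; that is, for every
`t > 0` one has `t * ψs (b/t) ≥ b log(lam/Lam)`, with equality when `t = b/(lam-Lam)`.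
Consequently the large-deviation rate function is `I(b) = b log(lam/Lam)`. -/
theorem stmt4 (lam Lam b : ℝ) (hLam : 0 < Lam) (h : Lam < lam) (hb : 0 < b)
    (ψs : ℝ → ℝ)
    (hψs : ∀ x : ℝ, ψs x = sSup (Set.range fun θ : ℝ =>
        θ * x - Lam * (Real.exp θ - 1) - lam * (Real.exp (-θ) - 1))) :
    (∀ t : ℝ, 0 < t → b * Real.log (lam / Lam) ≤ t * ψs (b / t)) ∧
    (b / (lam - Lam)) * ψs (b / (b / (lam - Lam))) = b * Real.log (lam / Lam) ∧
    sInf {y : ℝ | ∃ t : ℝ, 0 < t ∧ y = t * ψs (b / t)} = b * Real.log (lam / Lam) := by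
  have hlam : 0 < lam := hLam.trans h
  set θ₀ := Real.log (lam / Lam) with hθ₀def
  have hexpθ₀ : Real.exp θ₀ = lam / Lam := Real.exp_log (by positivity)
  have hexpnθ₀ : Real.exp (-θ₀) = Lam / lam := by
    rw [Real.exp_neg, hexpθ₀]
    field_simp
  -- value of the functional at θ₀
  have hval : ∀ x : ℝ,
      θ₀ * x - Lam * (Real.exp θ₀ - 1) - lam * (Real.exp (-θ₀) - 1) = θ₀ * x := by
    intro x
    rw [hexpθ₀, hexpnθ₀]
    field_simp
    ring
  -- the range is bounded above when x > 0
  have hbdd : ∀ x : ℝ, 0 < x → BddAbove (Set.range fun θ : ℝ =>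
      θ * x - Lam * (Real.exp θ - 1) - lam * (Real.exp (-θ) - 1)) := by
    intro x hx
    refine ⟨x * Real.log (x / Lam) - x + Lam + lam, ?_⟩
    rintro y ⟨θ, rfl⟩
    have hx' : Lam * Real.exp θ = x * Real.exp (θ - Real.log (x / Lam)) := by
      rw [Real.exp_sub, Real.exp_log (by positivity)]
      field_simp
    have h1 := Real.add_one_le_exp (θ - Real.log (x / Lam))
    have h1' : x * ((θ - Real.log (x / Lam)) + 1) ≤ Lam * Real.exp θ := by
      rw [hx']
      exact mul_le_mul_of_nonneg_left h1 hx.le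
    have h2 : (0:ℝ) < Real.exp (-θ) := Real.exp_pos _
    simp only
    nlinarith [h1', h2, hlam, hLam]
  -- lower bound: ψs x ≥ θ₀ * x for x > 0
  have hle : ∀ x : ℝ, 0 < x → θ₀ * x ≤ ψs x := by
    intro x hx
    rw [hψs x]
    calc θ₀ * x = θ₀ * x - Lam * (Real.exp θ₀ - 1) - lam * (Real.exp (-θ₀) - 1) :=
          (hval x).symm
      _ ≤ _ := le_csSup (hbdd x hx) ⟨θ₀, rfl⟩
  -- upper bound at x = lam - Lam
  have hub : ∀ θ : ℝ,
      θ * (lam - Lam) - Lam * (Real.exp θ - 1) - lam * (Real.exp (-θ) - 1)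
        ≤ θ₀ * (lam - Lam) := by
    intro θ
    have e1 : Lam * Real.exp θ = lam * Real.exp (θ - θ₀) := by
      rw [Real.exp_sub, hexpθ₀]
      field_simp
    have e2 : lam * Real.exp (-θ) = Lam * Real.exp (-(θ - θ₀)) := by
      have hh : Real.exp (-(θ - θ₀)) = Real.exp θ₀ * Real.exp (-θ) := by
        rw [← Real.exp_add]; ring_nf
      rw [hh, hexpθ₀]
      field_simp
    have h1 := mul_le_mul_of_nonneg_left (Real.add_one_le_exp (θ - θ₀)) hlam.le
    have h2 := mul_le_mul_of_nonneg_left (Real.add_one_le_exp (-(θ - θ₀))) hLam.le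
    nlinarith [e1, e2, h1, h2]
  have hψval : ψs (lam - Lam) = θ₀ * (lam - Lam) := by
    rw [hψs]
    apply le_antisymm
    · apply csSup_le (Set.range_nonempty _)
      rintro y ⟨θ, rfl⟩
      exact hub θ
    · calc θ₀ * (lam - Lam)
          = θ₀ * (lam - Lam) - Lam * (Real.exp θ₀ - 1) - lam * (Real.exp (-θ₀) - 1) :=
            (hval _).symm
        _ ≤ _ := le_csSup ⟨θ₀ * (lam - Lam), by rintro y ⟨θ, rfl⟩; exact hub θ⟩
            (Set.mem_range_self θ₀)
  have hne : lam - Lam ≠ 0 := by linarith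
  have harg : b / (b / (lam - Lam)) = lam - Lam := by
    field_simp
  -- part 1
  have part1 : ∀ t : ℝ, 0 < t → b * θ₀ ≤ t * ψs (b / t) := by
    intro t ht
    have hx : 0 < b / t := div_pos hb ht
    have := hle (b / t) hx
    calc b * θ₀ = t * (θ₀ * (b / t)) := by field_simp
      _ ≤ t * ψs (b / t) := mul_le_mul_of_nonneg_left this ht.le
  -- part 2
  have part2 : (b / (lam - Lam)) * ψs (b / (b / (lam - Lam))) = b * θ₀ := by
    rw [harg, hψval]
    field_simp
  refine ⟨part1, part2, ?_⟩
  have ht₀ : 0 < b / (lam - Lam) := div_pos hb (by linarith)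
  apply le_antisymm
  · exact csInf_le ⟨b * θ₀, by rintro y ⟨t, ht, rfl⟩; exact part1 t ht⟩
      ⟨b / (lam - Lam), ht₀, part2.symm⟩
  · exact le_csInf ⟨_, b / (lam - Lam), ht₀, rfl⟩
      (by rintro y ⟨t, ht, rfl⟩; exact part1 t ht)
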